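/- arXiv:1712.06064 — 6 statements merged into one kernel-verified Lean document; each statement's English description precedes it below -/
import Mathlib

section
/- Let g_j = χ_{τ_j} restricted to [q_j^l, q_j^u] with q_j^l ≤ τ_j^1 ≤ q_j^u for j = 1,...,n. Then the function g(z) := max{ Σ_j g_j(x_j) : Σ_j x_j = z, x_j ∈ [q_j^l, q_j^u] } defined on [Σ_j q_j^l, Σ_j q_j^u] equals χ_{(Σ_j τ_j^1, Σ_j τ_j^2)} on that interval. -/
/-- The tent function with top point `(t1, t2)`: `chi t1 t2 x = t2 - |x - t1|`. -/
noncomputable def chi (t1 t2 x : ℝ) : ℝ := t2 - |x - t1|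

lemma exists_sum_eq (n : ℕ) (a b : Fin n → ℝ) (hab : ∀ j, a j ≤ b j)
    (h1 : ∑ j, a j ≤ z) (h2 : z ≤ ∑ j, b j) :
    ∃ x : Fin n → ℝ, (∀ j, x j ∈ Set.Icc (a j) (b j)) ∧ (∑ j, x j) = z := by
  by_cases hS : ∑ j, b j = ∑ j, a j
  · refine ⟨a, fun j => ⟨le_refl _, hab j⟩, ?_⟩
    rw [hS] at h2; linarith
  · have hlt : 0 < ∑ j, b j - ∑ j, a j := by
      have : ∑ j, a j ≤ ∑ j, b j := Finset.sum_le_sum fun j _ => hab j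
      rcases lt_or_eq_of_le this with h | h
      · linarith
      · exact absurd h.symm hS
    set t := (z - ∑ j, a j) / (∑ j, b j - ∑ j, a j) with ht
    have ht0 : 0 ≤ t := div_nonneg (by linarith) (le_of_lt hlt)
    have ht1 : t ≤ 1 := by
      rw [ht, div_le_one hlt]; linarith
    refine ⟨fun j => a j + t * (b j - a j), fun j => ⟨?_, ?_⟩, ?_⟩
    · show a j ≤ a j + t * (b j - a j)
      nlinarith [mul_nonneg ht0 (sub_nonneg.mpr (hab j))]
    · show a j + t * (b j - a j) ≤ b j
      nlinarith [mul_le_of_le_one_left (sub_nonneg.mpr (hab j)) ht1]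
    · show ∑ j, (a j + t * (b j - a j)) = z
      rw [Finset.sum_add_distrib, ← Finset.mul_sum, Finset.sum_sub_distrib]
      have hc : t * (∑ j, b j - ∑ j, a j) = z - ∑ j, a j :=
        div_mul_cancel₀ _ (ne_of_gt hlt)
      linarith

/-- Maximizing a sum of tent functions over compact intervals containing the top points,
subject to the coupling constraint `∑ x j = z`, yields the tent function with top point
`(∑ τ1, ∑ τ2)` on the domain `[∑ ql, ∑ qu]`. -/
theorem stmt5 (n : ℕ) (τ1 τ2 ql qu : Fin n → ℝ)
    (hq : ∀ j, ql j ≤ τ1 j ∧ τ1 j ≤ qu j)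
    (z : ℝ) (hz : z ∈ Set.Icc (∑ j, ql j) (∑ j, qu j)) :
    IsGreatest
      {s : ℝ | ∃ x : Fin n → ℝ, (∀ j, x j ∈ Set.Icc (ql j) (qu j)) ∧
        (∑ j, x j) = z ∧ s = ∑ j, chi (τ1 j) (τ2 j) (x j)}
      (chi (∑ j, τ1 j) (∑ j, τ2 j) z) := by
  obtain ⟨hzl, hzu⟩ := hz
  constructor
  · -- membership
    rcases le_or_gt (∑ j, τ1 j) z with h | h
    · obtain ⟨x, hx, hxs⟩ := exists_sum_eq n τ1 qu (fun j => (hq j).2) h hzu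
      refine ⟨x, fun j => ⟨le_trans (hq j).1 (hx j).1, (hx j).2⟩, hxs, ?_⟩
      have : ∀ j, chi (τ1 j) (τ2 j) (x j) = τ2 j - (x j - τ1 j) := by
        intro j; unfold chi; rw [abs_of_nonneg (by linarith [(hx j).1])]
      simp only [this]
      unfold chi
      rw [abs_of_nonneg (by linarith)]
      rw [Finset.sum_sub_distrib, Finset.sum_sub_distrib, hxs]
    · obtain ⟨x, hx, hxs⟩ := exists_sum_eq n ql τ1 (fun j => (hq j).1) hzl h.le
      refine ⟨x, fun j => ⟨(hx j).1, le_trans (hx j).2 (hq j).2⟩, hxs, ?_⟩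
      have : ∀ j, chi (τ1 j) (τ2 j) (x j) = τ2 j - (τ1 j - x j) := by
        intro j; unfold chi
        rw [abs_of_nonpos (by linarith [(hx j).2])]; ring
      simp only [this]
      unfold chi
      rw [abs_of_nonpos (by linarith), Finset.sum_sub_distrib, Finset.sum_sub_distrib, hxs]
      ring
  · -- upper bound
    rintro s ⟨x, hx, hxs, rfl⟩
    unfold chi
    rw [Finset.sum_sub_distrib]
    have h1 : |z - ∑ j, τ1 j| ≤ ∑ j, |x j - τ1 j| := by
      calc |z - ∑ j, τ1 j| = |∑ j, (x j - τ1 j)| := by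
            rw [Finset.sum_sub_distrib, hxs]
        _ ≤ ∑ j, |x j - τ1 j| := Finset.abs_sum_le_sum_abs _ _
    linarith
end

section
/- In the setting of maximizing Σ_j χ_{τ_j}(x_j) subject to Σ_j x_j = z and x_j ∈ [q_j^l, q_j^u] with q_j^l ≤ τ_j^1 ≤ q_j^u: if z = Σ_j τ_j^1 then x* = (τ_1^1,...,τ_n^1) is the unique maximizer; if Σ_j q_j^l ≤ z < Σ_j τ_j^1 then the set of maximizers equals { x : q^l ≤ x ≤ τ^1 componentwise, Σ_j x_j = z }; and symmetrically for Σ_j τ_j^1 < z ≤ Σ_j q_j^u the maximizers are { x : τ^1 ≤ x ≤ q^u componentwise, Σ_j x_j = z }. -/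
private lemma sum_chi (n : ℕ) (τ1 τ2 x : Fin n → ℝ) :
    ∑ j, chi (τ1 j) (τ2 j) (x j) = (∑ j, τ2 j) - ∑ j, |x j - τ1 j| := by
  simp [chi, Finset.sum_sub_distrib]

private lemma lb_le (n : ℕ) (τ1 x : Fin n → ℝ) :
    (∑ j, τ1 j) - (∑ j, x j) ≤ ∑ j, |x j - τ1 j| := by
  rw [← Finset.sum_sub_distrib]
  exact Finset.sum_le_sum fun i _ => by rw [abs_sub_comm]; exact le_abs_self _

private lemma ub_le (n : ℕ) (τ1 x : Fin n → ℝ) :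
    (∑ j, x j) - (∑ j, τ1 j) ≤ ∑ j, |x j - τ1 j| := by
  rw [← Finset.sum_sub_distrib]
  exact Finset.sum_le_sum fun i _ => le_abs_self _

private lemma eq_lb (n : ℕ) (τ1 x : Fin n → ℝ)
    (h : ∑ j, |x j - τ1 j| = (∑ j, τ1 j) - (∑ j, x j)) : ∀ j, x j ≤ τ1 j := by
  have h0 : ∑ j, (|x j - τ1 j| - (τ1 j - x j)) = 0 := by
    rw [Finset.sum_sub_distrib, Finset.sum_sub_distrib]; linarith
  have h1 := (Finset.sum_eq_zero_iff_of_nonneg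
    (fun i _ => by rw [abs_sub_comm]; linarith [le_abs_self (τ1 i - x i)])).1 h0
  intro j
  have h2 := h1 j (Finset.mem_univ j)
  have h3 : τ1 j - x j = |x j - τ1 j| := by linarith
  have := abs_nonneg (x j - τ1 j)
  linarith

private lemma eq_ub (n : ℕ) (τ1 x : Fin n → ℝ)
    (h : ∑ j, |x j - τ1 j| = (∑ j, x j) - (∑ j, τ1 j)) : ∀ j, τ1 j ≤ x j := by
  have h0 : ∑ j, (|x j - τ1 j| - (x j - τ1 j)) = 0 := by
    rw [Finset.sum_sub_distrib, Finset.sum_sub_distrib]; linarith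
  have h1 := (Finset.sum_eq_zero_iff_of_nonneg
    (fun i _ => by linarith [le_abs_self (x i - τ1 i)])).1 h0
  intro j
  have h2 := h1 j (Finset.mem_univ j)
  have := abs_nonneg (x j - τ1 j)
  linarith

private lemma sum_abs_of_le (n : ℕ) (τ1 x : Fin n → ℝ) (h : ∀ j, x j ≤ τ1 j) :
    ∑ j, |x j - τ1 j| = (∑ j, τ1 j) - (∑ j, x j) := by
  rw [← Finset.sum_sub_distrib]
  exact Finset.sum_congr rfl fun i _ => by
    rw [abs_of_nonpos (by linarith [h i])]; ring

private lemma sum_abs_of_ge (n : ℕ) (τ1 x : Fin n → ℝ) (h : ∀ j, τ1 j ≤ x j) :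
    ∑ j, |x j - τ1 j| = (∑ j, x j) - (∑ j, τ1 j) := by
  rw [← Finset.sum_sub_distrib]
  exact Finset.sum_congr rfl fun i _ => abs_of_nonneg (by linarith [h i])

/-- Characterization of the maximizers of `∑ j chi (τ1 j) (τ2 j) (x j)` subject to
`∑ j x j = z` and `x j ∈ [ql j, qu j]`, with `ql j ≤ τ1 j ≤ qu j`. -/
theorem stmt6 (n : ℕ) (τ1 τ2 ql qu : Fin n → ℝ)
    (hq : ∀ j, ql j ≤ τ1 j ∧ τ1 j ≤ qu j) (z : ℝ)
    (D : Set (Fin n → ℝ)) (hD : D = {x | (∀ j, x j ∈ Set.Icc (ql j) (qu j)) ∧ (∑ j, x j) = z})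
    (F : (Fin n → ℝ) → ℝ) (hF : F = fun x => ∑ j, chi (τ1 j) (τ2 j) (x j))
    (M : Set (Fin n → ℝ)) (hM : M = {x ∈ D | ∀ y ∈ D, F y ≤ F x}) :
    (z = ∑ j, τ1 j → M = {τ1}) ∧
    (∑ j, ql j ≤ z ∧ z < ∑ j, τ1 j →
      M = {x | (∀ j, ql j ≤ x j ∧ x j ≤ τ1 j) ∧ (∑ j, x j) = z}) ∧
    (∑ j, τ1 j < z ∧ z ≤ ∑ j, qu j →
      M = {x | (∀ j, τ1 j ≤ x j ∧ x j ≤ qu j) ∧ (∑ j, x j) = z}) := by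
  subst hD hF hM
  refine ⟨?_, ?_, ?_⟩
  · -- z = ∑ τ1
    intro hz
    ext x
    simp only [Set.mem_setOf_eq, Set.mem_singleton_iff, Set.mem_Icc]
    constructor
    · rintro ⟨⟨hxD, hxs⟩, hmax⟩
      have hτD : (∀ j, τ1 j ∈ Set.Icc (ql j) (qu j)) ∧ (∑ j, τ1 j) = z :=
        ⟨fun j => ⟨(hq j).1, (hq j).2⟩, hz.symm⟩
      have h1 := hmax τ1 hτD
      rw [sum_chi, sum_chi] at h1
      have h0 : ∑ j, |τ1 j - τ1 j| = (0 : ℝ) := by simp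
      have h2 : ∑ j, |x j - τ1 j| = 0 := by
        have hn : 0 ≤ ∑ j, |x j - τ1 j| :=
          Finset.sum_nonneg fun i _ => abs_nonneg _
        linarith
      have h3 := (Finset.sum_eq_zero_iff_of_nonneg
        (fun i _ => abs_nonneg (x i - τ1 i))).1 h2
      funext j
      have := h3 j (Finset.mem_univ j)
      have := abs_eq_zero.1 this
      linarith [sub_eq_zero.1 (abs_eq_zero.1 (h3 j (Finset.mem_univ j)))]
    · intro hx
      rw [hx]
      refine ⟨⟨fun j => ⟨(hq j).1, (hq j).2⟩, hz.symm⟩, ?_⟩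
      intro y hy
      rw [sum_chi, sum_chi]
      have hn : 0 ≤ ∑ j, |y j - τ1 j| := Finset.sum_nonneg fun i _ => abs_nonneg _
      have h0 : ∑ j, |τ1 j - τ1 j| = (0 : ℝ) := by simp
      linarith
  · -- ∑ ql ≤ z < ∑ τ1
    rintro ⟨hzl, hzu⟩
    set L := ∑ j, ql j with hL
    set S := ∑ j, τ1 j with hS
    have hSL : 0 < S - L := by linarith
    set t : ℝ := (z - L) / (S - L) with ht
    have ht0 : 0 ≤ t := div_nonneg (by linarith) (by linarith)
    have ht1 : t ≤ 1 := by
      rw [div_le_one hSL]; linarith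
    set xs : Fin n → ℝ := fun j => ql j + t * (τ1 j - ql j) with hxs
    have hxsl : ∀ j, ql j ≤ xs j := fun j => by
      have : 0 ≤ t * (τ1 j - ql j) := mul_nonneg ht0 (by linarith [(hq j).1])
      simp only [hxs]; linarith
    have hxsu : ∀ j, xs j ≤ τ1 j := fun j => by
      have : t * (τ1 j - ql j) ≤ 1 * (τ1 j - ql j) :=
        mul_le_mul_of_nonneg_right ht1 (by linarith [(hq j).1])
      simp only [hxs]; linarith
    have hxss : ∑ j, xs j = z := by
      simp only [hxs]
      rw [Finset.sum_add_distrib, ← Finset.mul_sum, Finset.sum_sub_distrib]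
      rw [← hL, ← hS, ht]
      field_simp
      ring
    have hxsD : (∀ j, xs j ∈ Set.Icc (ql j) (qu j)) ∧ (∑ j, xs j) = z :=
      ⟨fun j => ⟨hxsl j, le_trans (hxsu j) (hq j).2⟩, hxss⟩
    have hxsG : ∑ j, |xs j - τ1 j| = S - z := by
      rw [sum_abs_of_le n τ1 xs hxsu, hxss]
    ext x
    simp only [Set.mem_setOf_eq, Set.mem_Icc]
    constructor
    · rintro ⟨⟨hxD, hxsum⟩, hmax⟩
      have h1 := hmax xs hxsD
      rw [sum_chi, sum_chi] at h1
      have h2 : ∑ j, |x j - τ1 j| ≤ S - z := by rw [← hxsG]; linarith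
      have h3 : S - z ≤ ∑ j, |x j - τ1 j| := by
        have := lb_le n τ1 x; rw [hxsum] at this; exact this
      have h4 : ∑ j, |x j - τ1 j| = S - (∑ j, x j) := by rw [hxsum]; linarith
      have h5 := eq_lb n τ1 x h4
      exact ⟨fun j => ⟨(hxD j).1, h5 j⟩, hxsum⟩
    · rintro ⟨hb, hsum⟩
      have hxG : ∑ j, |x j - τ1 j| = S - z := by
        rw [sum_abs_of_le n τ1 x (fun j => (hb j).2), hsum]
      refine ⟨⟨fun j => ⟨(hb j).1, le_trans (hb j).2 (hq j).2⟩, hsum⟩, ?_⟩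
      rintro y ⟨hyD, hysum⟩
      rw [sum_chi, sum_chi]
      have h3 : S - z ≤ ∑ j, |y j - τ1 j| := by
        have := lb_le n τ1 y; rw [hysum] at this; exact this
      linarith
  · -- ∑ τ1 < z ≤ ∑ qu
    rintro ⟨hzl, hzu⟩
    set U := ∑ j, qu j with hU
    set S := ∑ j, τ1 j with hS
    have hSU : 0 < U - S := by linarith
    set t : ℝ := (z - S) / (U - S) with ht
    have ht0 : 0 ≤ t := div_nonneg (by linarith) (by linarith)
    have ht1 : t ≤ 1 := by
      rw [div_le_one hSU]; linarith
    set xs : Fin n → ℝ := fun j => τ1 j + t * (qu j - τ1 j) with hxs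
    have hxsl : ∀ j, τ1 j ≤ xs j := fun j => by
      have : 0 ≤ t * (qu j - τ1 j) := mul_nonneg ht0 (by linarith [(hq j).2])
      simp only [hxs]; linarith
    have hxsu : ∀ j, xs j ≤ qu j := fun j => by
      have : t * (qu j - τ1 j) ≤ 1 * (qu j - τ1 j) :=
        mul_le_mul_of_nonneg_right ht1 (by linarith [(hq j).2])
      simp only [hxs]; linarith
    have hxss : ∑ j, xs j = z := by
      simp only [hxs]
      rw [Finset.sum_add_distrib, ← Finset.mul_sum, Finset.sum_sub_distrib]
      rw [← hU, ← hS, ht]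
      field_simp
      ring
    have hxsD : (∀ j, xs j ∈ Set.Icc (ql j) (qu j)) ∧ (∑ j, xs j) = z :=
      ⟨fun j => ⟨le_trans (hq j).1 (hxsl j), hxsu j⟩, hxss⟩
    have hxsG : ∑ j, |xs j - τ1 j| = z - S := by
      rw [sum_abs_of_ge n τ1 xs hxsl, hxss]
    ext x
    simp only [Set.mem_setOf_eq, Set.mem_Icc]
    constructor
    · rintro ⟨⟨hxD, hxsum⟩, hmax⟩
      have h1 := hmax xs hxsD
      rw [sum_chi, sum_chi] at h1
      have h2 : ∑ j, |x j - τ1 j| ≤ z - S := by rw [← hxsG]; linarith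
      have h3 : z - S ≤ ∑ j, |x j - τ1 j| := by
        have := ub_le n τ1 x; rw [hxsum] at this; exact this
      have h4 : ∑ j, |x j - τ1 j| = (∑ j, x j) - S := by rw [hxsum]; linarith
      have h5 := eq_ub n τ1 x h4
      exact ⟨fun j => ⟨h5 j, (hxD j).2⟩, hxsum⟩
    · rintro ⟨hb, hsum⟩
      have hxG : ∑ j, |x j - τ1 j| = z - S := by
        rw [sum_abs_of_ge n τ1 x (fun j => (hb j).1), hsum]
      refine ⟨⟨fun j => ⟨le_trans (hq j).1 (hb j).1, (hb j).2⟩, hsum⟩, ?_⟩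
      rintro y ⟨hyD, hysum⟩
      rw [sum_chi, sum_chi]
      have h3 : z - S ≤ ∑ j, |y j - τ1 j| := by
        have := ub_le n τ1 y; rw [hysum] at this; exact this
      linarith
end

section
/- Let P₁ and P₂ be nonempty compact convex subsets of ℝ, and for i = 1,2 let g_i : conv(X_i) → ℝ be tent functions χ_{τ_i} with top points satisfying τ_i^1 ∈ X_i, where each X_i ⊂ ℝ is a finite union of disjoint closed intervals. If both X₁∩(−∞,τ₁¹] + X₂∩(−∞,τ₂¹] and X₁∩[τ₁¹,∞) + X₂∩[τ₂¹,∞) are intervals (connected), then for every z, sup{ g₁(x₁)+g₂(x₂) : x₁∈X₁, x₂∈X₂, x₁+x₂=z } = sup{ g₁(x₁)+g₂(x₂) : x₁∈conv(X₁), x₂∈conv(X₂), x₁+x₂=z }. -/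
open Pointwise

/-- If `X 0`, `X 1` are finite unions of disjoint closed bounded intervals, the top point
abscissae belong to the sets, and the Minkowski sums of the lower parts and of the upper
parts are connected, then optimizing the sum of the two tent functions over `X 0 × X 1`
subject to `x1 + x2 = z` gives the same value as over the convex hulls. -/
theorem stmt8 (X : Fin 2 → Set ℝ) (τ1 τ2 : Fin 2 → ℝ)
    (hX : ∀ i, ∃ (m : ℕ) (a b : Fin m → ℝ), (∀ j, a j ≤ b j) ∧
      (∀ j j', j ≠ j' → Disjoint (Set.Icc (a j) (b j)) (Set.Icc (a j') (b j'))) ∧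
      X i = ⋃ j, Set.Icc (a j) (b j))
    (hXne : ∀ i, (X i).Nonempty)
    (hτ : ∀ i, τ1 i ∈ X i)
    (hlow : IsPreconnected ((X 0 ∩ Set.Iic (τ1 0)) + (X 1 ∩ Set.Iic (τ1 1))))
    (hhigh : IsPreconnected ((X 0 ∩ Set.Ici (τ1 0)) + (X 1 ∩ Set.Ici (τ1 1)))) :
    ∀ z : ℝ,
      sSup {s : ℝ | ∃ x1 ∈ X 0, ∃ x2 ∈ X 1, x1 + x2 = z ∧
          s = chi (τ1 0) (τ2 0) x1 + chi (τ1 1) (τ2 1) x2} =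
      sSup {s : ℝ | ∃ x1 ∈ convexHull ℝ (X 0), ∃ x2 ∈ convexHull ℝ (X 1), x1 + x2 = z ∧
          s = chi (τ1 0) (τ2 0) x1 + chi (τ1 1) (τ2 1) x2} := by
  have hXc : ∀ i, IsCompact (X i) := by
    intro i
    obtain ⟨m, a, b, _, _, hXi⟩ := hX i
    rw [hXi]
    exact isCompact_iUnion fun j => isCompact_Icc
  have hbdd : ∀ i, BddBelow (X i) := fun i => (hXc i).bddBelow
  have hbddA : ∀ i, BddAbove (X i) := fun i => (hXc i).bddAbove
  have hm : ∀ i, sInf (X i) ∈ X i := fun i => (hXc i).sInf_mem (hXne i)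
  have hM : ∀ i, sSup (X i) ∈ X i := fun i => (hXc i).sSup_mem (hXne i)
  have hmle : ∀ i, sInf (X i) ≤ τ1 i := fun i => csInf_le (hbdd i) (hτ i)
  have hMge : ∀ i, τ1 i ≤ sSup (X i) := fun i => le_csSup (hbddA i) (hτ i)
  have hhull : ∀ i, convexHull ℝ (X i) ⊆ Set.Icc (sInf (X i)) (sSup (X i)) := by
    intro i
    apply convexHull_min _ (convex_Icc _ _)
    exact fun x hx => ⟨csInf_le (hbdd i) hx, le_csSup (hbddA i) hx⟩
  intro z
  set c := τ2 0 + τ2 1 with hc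
  set T := τ1 0 + τ1 1 with hT
  have hub : ∀ x1 x2 : ℝ, x1 + x2 = z →
      chi (τ1 0) (τ2 0) x1 + chi (τ1 1) (τ2 1) x2 ≤ c - |z - T| := by
    intro x1 x2 hx
    simp only [chi, hc, hT]
    have h1 : |z - (τ1 0 + τ1 1)| ≤ |x1 - τ1 0| + |x2 - τ1 1| := by
      have h2 : z - (τ1 0 + τ1 1) = (x1 - τ1 0) + (x2 - τ1 1) := by
        rw [← hx]; ring
      rw [h2]; exact abs_add_le _ _
    linarith
  by_cases hz : z ∈ Set.Icc (sInf (X 0) + sInf (X 1)) (sSup (X 0) + sSup (X 1))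
  · -- z in range: both sups equal c - |z - T|
    have key : ∃ x1 ∈ X 0, ∃ x2 ∈ X 1, x1 + x2 = z ∧
        c - |z - T| = chi (τ1 0) (τ2 0) x1 + chi (τ1 1) (τ2 1) x2 := by
      rcases le_total z T with hzT | hzT
      · have hmemL : z ∈ (X 0 ∩ Set.Iic (τ1 0)) + (X 1 ∩ Set.Iic (τ1 1)) := by
          have h1 : sInf (X 0) + sInf (X 1) ∈
              (X 0 ∩ Set.Iic (τ1 0)) + (X 1 ∩ Set.Iic (τ1 1)) :=
            Set.add_mem_add ⟨hm 0, hmle 0⟩ ⟨hm 1, hmle 1⟩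
          have h2 : T ∈ (X 0 ∩ Set.Iic (τ1 0)) + (X 1 ∩ Set.Iic (τ1 1)) :=
            Set.add_mem_add ⟨hτ 0, Set.mem_Iic.mpr le_rfl⟩ ⟨hτ 1, Set.mem_Iic.mpr le_rfl⟩
          exact hlow.ordConnected.out h1 h2 ⟨hz.1, hzT⟩
        obtain ⟨x1, ⟨hx1, hx1le⟩, x2, ⟨hx2, hx2le⟩, hsum⟩ := hmemL
        refine ⟨x1, hx1, x2, hx2, hsum, ?_⟩
        simp only [chi, hc, hT]
        rw [abs_of_nonpos (by simp only [Set.mem_Iic] at hx1le hx2le; linarith),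
          abs_of_nonpos (by simp only [Set.mem_Iic] at hx1le; linarith),
          abs_of_nonpos (by simp only [Set.mem_Iic] at hx2le; linarith)]
        have hs' : x1 + x2 = z := hsum
        linarith [hs']
      · have hmemU : z ∈ (X 0 ∩ Set.Ici (τ1 0)) + (X 1 ∩ Set.Ici (τ1 1)) := by
          have h1 : T ∈ (X 0 ∩ Set.Ici (τ1 0)) + (X 1 ∩ Set.Ici (τ1 1)) :=
            Set.add_mem_add ⟨hτ 0, Set.mem_Ici.mpr le_rfl⟩ ⟨hτ 1, Set.mem_Ici.mpr le_rfl⟩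
          have h2 : sSup (X 0) + sSup (X 1) ∈
              (X 0 ∩ Set.Ici (τ1 0)) + (X 1 ∩ Set.Ici (τ1 1)) :=
            Set.add_mem_add ⟨hM 0, hMge 0⟩ ⟨hM 1, hMge 1⟩
          exact hhigh.ordConnected.out h1 h2 ⟨hzT, hz.2⟩
        obtain ⟨x1, ⟨hx1, hx1le⟩, x2, ⟨hx2, hx2le⟩, hsum⟩ := hmemU
        refine ⟨x1, hx1, x2, hx2, hsum, ?_⟩
        simp only [chi, hc, hT]
        rw [abs_of_nonneg (by simp only [Set.mem_Ici] at hx1le hx2le; linarith),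
          abs_of_nonneg (by simp only [Set.mem_Ici] at hx1le; linarith),
          abs_of_nonneg (by simp only [Set.mem_Ici] at hx2le; linarith)]
        have hs' : x1 + x2 = z := hsum
        linarith [hs']
    obtain ⟨x1, hx1, x2, hx2, hsum, heq⟩ := key
    have hG1 : IsGreatest {s : ℝ | ∃ x1 ∈ X 0, ∃ x2 ∈ X 1, x1 + x2 = z ∧
        s = chi (τ1 0) (τ2 0) x1 + chi (τ1 1) (τ2 1) x2} (c - |z - T|) := by
      constructor
      · exact ⟨x1, hx1, x2, hx2, hsum, heq⟩
      · rintro s ⟨y1, _, y2, _, hs, rfl⟩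
        exact hub y1 y2 hs
    have hG2 : IsGreatest {s : ℝ | ∃ x1 ∈ convexHull ℝ (X 0), ∃ x2 ∈ convexHull ℝ (X 1),
        x1 + x2 = z ∧ s = chi (τ1 0) (τ2 0) x1 + chi (τ1 1) (τ2 1) x2} (c - |z - T|) := by
      constructor
      · exact ⟨x1, subset_convexHull ℝ _ hx1, x2, subset_convexHull ℝ _ hx2, hsum, heq⟩
      · rintro s ⟨y1, _, y2, _, hs, rfl⟩
        exact hub y1 y2 hs
    rw [hG1.csSup_eq, hG2.csSup_eq]
  · -- z out of range: both sets empty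
    rw [Set.mem_Icc] at hz
    push_neg at hz
    have hE2 : {s : ℝ | ∃ x1 ∈ convexHull ℝ (X 0), ∃ x2 ∈ convexHull ℝ (X 1),
        x1 + x2 = z ∧ s = chi (τ1 0) (τ2 0) x1 + chi (τ1 1) (τ2 1) x2} = ∅ := by
      rw [Set.eq_empty_iff_forall_notMem]
      rintro s ⟨y1, h1, y2, h2, hs, -⟩
      obtain ⟨ha1, hb1⟩ := hhull 0 h1
      obtain ⟨ha2, hb2⟩ := hhull 1 h2
      rcases lt_or_ge z (sInf (X 0) + sInf (X 1)) with h | h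
      · linarith
      · have := hz h; linarith
    have hE1 : {s : ℝ | ∃ x1 ∈ X 0, ∃ x2 ∈ X 1, x1 + x2 = z ∧
        s = chi (τ1 0) (τ2 0) x1 + chi (τ1 1) (τ2 1) x2} = ∅ := by
      rw [Set.eq_empty_iff_forall_notMem]
      rintro s ⟨y1, h1, y2, h2, hs, hval⟩
      rw [Set.eq_empty_iff_forall_notMem] at hE2
      exact hE2 s ⟨y1, subset_convexHull ℝ _ h1, y2, subset_convexHull ℝ _ h2, hs, hval⟩
    rw [hE1, hE2]
end

section
/- Let P ⊂ {x ∈ ℝ^d : x_k > 0} be a polytope contained in a hyperplane not orthogonal to {x_k = 0}. With γ̂ > max_{x∈P} x_k, the sweep swp_k(P) = {p − θ p_k e_k : p ∈ P, θ ∈ [0,1]} equals (P + [−γ̂ e_k, 0]) ∩ {x : x_k ≥ 0}, where P + [−γ̂ e_k, 0] denotes the Minkowski sum of P with the segment from −γ̂ e_k to the origin. -/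
open Pointwise

/-- Sweep of a set `P` in direction `e k`: the union of all segments from points of `P`
to their projections onto `{x | x k = 0}`. -/
def swpk (d : ℕ) (k : Fin d) (P : Set (Fin d → ℝ)) : Set (Fin d → ℝ) :=
  {q | ∃ p ∈ P, ∃ θ ∈ Set.Icc (0 : ℝ) 1, q = p - (θ * p k) • (Pi.single k 1 : Fin d → ℝ)}

/-- For a polytope `P ⊂ {x | x k > 0}` contained in a hyperplane not orthogonal to
`{x | x k = 0}` and `γ` exceeding the maximum `k`-th coordinate over `P`, the sweep
equals the Minkowski sum of `P` with the segment `[-γ e k, 0]` intersected with the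
halfspace `{x | x k ≥ 0}`. -/
theorem stmt11 (d : ℕ) (k : Fin d) (S : Finset (Fin d → ℝ)) (P : Set (Fin d → ℝ))
    (hP : P = convexHull ℝ (S : Set (Fin d → ℝ)))
    (hpos : ∀ x ∈ P, 0 < x k)
    (π : Fin d → ℝ) (π0 : ℝ) (hπk : π k ≠ 0)
    (hplane : ∀ x ∈ P, (∑ i, π i * x i) = π0)
    (γ : ℝ) (hγ : ∀ x ∈ P, x k < γ) :
    swpk d k P =
      (P + segment ℝ (-(γ • (Pi.single k 1 : Fin d → ℝ))) 0) ∩ {x | 0 ≤ x k} := by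
  ext q
  simp only [swpk, Set.mem_setOf_eq, Set.mem_inter_iff, Set.mem_add, segment_eq_image,
    Set.mem_image, Set.mem_Icc]
  constructor
  · rintro ⟨p, hp, θ, ⟨hθ0, hθ1⟩, rfl⟩
    have hpk := hpos p hp
    have hγp := hγ p hp
    have hγ0 : 0 < γ := hpk.trans hγp
    have hθp : θ * p k ≤ γ := by nlinarith
    have hd0 : 0 ≤ θ * p k / γ := by positivity
    have hd1 : θ * p k / γ ≤ 1 := by rw [div_le_one hγ0]; exact hθp
    refine ⟨⟨p, hp, -((θ * p k) • (Pi.single k 1 : Fin d → ℝ)), ⟨1 - θ * p k / γ,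
      ⟨by linarith, by linarith⟩, ?_⟩, by rw [sub_eq_add_neg]⟩, ?_⟩
    · rw [smul_zero, add_zero, smul_neg, smul_smul, sub_sub_cancel,
        div_mul_cancel₀ _ hγ0.ne']
    · simp only [Pi.sub_apply, Pi.smul_apply, Pi.single_eq_same, smul_eq_mul, mul_one,
        Set.mem_setOf_eq]
      nlinarith
  · rintro ⟨⟨p, hp, b, ⟨t, ⟨ht0, ht1⟩, rfl⟩, rfl⟩, hq⟩
    have hpk := hpos p hp
    have hγ0 : 0 < γ := hpk.trans (hγ p hp)
    have hb : (1 - t) • (-(γ • (Pi.single k 1 : Fin d → ℝ))) + t • 0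
        = -(((1 - t) * γ) • (Pi.single k 1 : Fin d → ℝ)) := by
      rw [smul_zero, add_zero, smul_neg, smul_smul]
    rw [hb] at hq ⊢
    have hqk : 0 ≤ p k - (1 - t) * γ := by
      simpa [Pi.add_apply, Pi.neg_apply, Pi.smul_apply, Pi.single_eq_same] using hq
    refine ⟨p, hp, (1 - t) * γ / p k, ⟨?_, ?_⟩, ?_⟩
    · have : 0 ≤ 1 - t := by linarith
      positivity
    · rw [div_le_one hpk]; linarith
    · rw [div_mul_cancel₀ _ hpk.ne']; abel
end

section
/- Let P ⊂ ℝ^d be a full-dimensional polytope with P ⊂ {x : x_k ≥ 0}. Every point x ∈ P is shaded in direction e_k by a point lying in some e_k-top facet of P; that is, there exist a facet F of P whose outward normal π satisfies π_k > 0 and a point x̂ ∈ F with x̂_k ≥ x_k and x̂_i = x_i for all i ≠ k. -/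
open Finset Function Module Set Filter

namespace Stmt12Aux

noncomputable def lin {d : ℕ} (c : Fin d → ℝ) : (Fin d → ℝ) →ₗ[ℝ] ℝ where
  toFun z := ∑ j, c j * z j
  map_add' a b := by simp [mul_add, Finset.sum_add_distrib]
  map_smul' r a := by simp [smul_eq_mul, Finset.mul_sum, mul_left_comm]

lemma lin_apply {d : ℕ} (c z : Fin d → ℝ) : lin c z = ∑ j, c j * z j := rfl

lemma lin_update {d : ℕ} (k : Fin d) (c z : Fin d → ℝ) (t : ℝ) :
    lin c (Function.update z k t) = lin c z - c k * z k + c k * t := by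
  classical
  simp only [lin_apply]
  have h : ∀ j, c j * (Function.update z k t j)
      = c j * z j + (if j = k then c j * (t - z k) else 0) := by
    intro j
    rcases eq_or_ne j k with rfl | h
    · simp [Function.update_self]; ring
    · rw [Function.update_of_ne h, if_neg h]; ring
  rw [Finset.sum_congr rfl fun j _ => h j, Finset.sum_add_distrib,
    Finset.sum_ite_eq' Finset.univ k (fun j => c j * (t - z k))]
  simp; ring

lemma lin_single {d : ℕ} (k : Fin d) (c : Fin d → ℝ) : lin c (Pi.single k 1) = c k := by
  classical
  simp [lin_apply, Pi.single_apply, mul_ite, Finset.sum_ite_eq']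

lemma lin_continuous {d : ℕ} (c : Fin d → ℝ) : Continuous (lin c) := by
  have : Continuous fun z : Fin d → ℝ => ∑ j, c j * z j :=
    continuous_finset_sum _ fun j _ => continuous_const.mul (continuous_apply j)
  exact this

lemma baire_cover {X : Type*} [TopologicalSpace X] [BaireSpace X] {m : ℕ}
    (T : Fin m → Set X) (P : Set X) (hclosed : ∀ i, IsClosed (T i))
    (hcover : ∀ z ∈ P, ∃ i, z ∈ T i) {x : X} (hx : x ∈ closure (interior P)) :
    ∃ i, x ∈ T i ∧ (interior (T i)).Nonempty := by
  classical
  set C : Option (Fin m) → Set X := fun o => o.elim (closure Pᶜ) T with hC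
  have hCc : ∀ o, IsClosed (C o) := by rintro (_ | i); exacts [isClosed_closure, hclosed i]
  have hU : ⋃ o, C o = univ := by
    ext z; simp only [Set.mem_iUnion, Set.mem_univ, iff_true]
    by_cases hz : z ∈ P
    · obtain ⟨i, hi⟩ := hcover z hz; exact ⟨some i, hi⟩
    · exact ⟨none, subset_closure hz⟩
  have hdense := dense_iUnion_interior_of_closed hCc hU
  set M : Set X := ⋃ i ∈ {i | (interior (T i)).Nonempty}, T i with hM
  have hMc : IsClosed M := (Set.toFinite _).isClosed_biUnion fun i _ => hclosed i
  have hsub : interior P ⊆ closure M := by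
    intro z hz
    rw [mem_closure_iff]
    intro U hUo hzU
    obtain ⟨w, hwD, hwU, hwint⟩ :
        ∃ w, w ∈ ⋃ o, interior (C o) ∧ w ∈ U ∧ w ∈ interior P := by
      obtain ⟨w, hw1, hw2⟩ := hdense.exists_mem_open (hUo.inter isOpen_interior)
        ⟨z, hzU, hz⟩
      exact ⟨w, hw1, hw2.1, hw2.2⟩
    obtain ⟨o, ho⟩ := Set.mem_iUnion.mp hwD
    match o with
    | none =>
        exfalso
        have : w ∈ (closure (interior P))ᶜ := by
          simpa [hC, closure_compl, interior_compl] using ho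
        exact this (subset_closure hwint)
    | some i =>
        exact ⟨w, hwU, Set.mem_biUnion ⟨w, ho⟩ (interior_subset ho)⟩
  have hxM : x ∈ M := by
    have := (closure_mono hsub) hx
    rwa [closure_closure, hMc.closure_eq] at this
  obtain ⟨i, hi, hxT⟩ := Set.mem_iUnion₂.mp hxM
  exact ⟨i, hxT, hi⟩

lemma subset_closure_interior {E : Type*} [NormedAddCommGroup E] [NormedSpace ℝ E]
    {s : Set E} (hconv : Convex ℝ s) (hint : (interior s).Nonempty) :
    s ⊆ closure (interior s) := by
  obtain ⟨w, hw⟩ := hint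
  intro x hx
  have hseq : Tendsto (fun n : ℕ => x + (1/(n+1) : ℝ) • (w - x)) atTop (nhds x) := by
    have h0 : Tendsto (fun n : ℕ => (1/(n+1) : ℝ)) atTop (nhds 0) :=
      tendsto_one_div_add_atTop_nhds_zero_nat
    have := (h0.smul_const (w - x)).const_add x
    simpa using this
  refine mem_closure_of_tendsto hseq (Filter.Eventually.of_forall fun n => ?_)
  refine hconv.add_smul_sub_mem_interior hx hw ⟨by positivity, ?_⟩
  rw [div_le_one (by positivity)]
  linarith [Nat.cast_nonneg (α := ℝ) n]

end Stmt12Aux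

/-- Every point of a full-dimensional polytope `P ⊆ {x | x k ≥ 0}` is shaded in direction
`e k` by a point lying in some `e k`-top facet of `P`: a `(d-1)`-dimensional face of `P`
which is the argmax over `P` of a linear functional `c` with `c k > 0`. -/
theorem stmt12 (d m : ℕ) (k : Fin d) (π : Fin m → Fin d → ℝ) (b : Fin m → ℝ)
    (P : Set (Fin d → ℝ)) (hPdef : P = {x | ∀ i, (∑ j, π i j * x j) ≤ b i})
    (hcomp : IsCompact P) (hint : (interior P).Nonempty)
    (hPk : ∀ x ∈ P, 0 ≤ x k) :
    ∀ x ∈ P, ∃ (c : Fin d → ℝ) (F : Set (Fin d → ℝ)),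
      0 < c k ∧
      F = {y ∈ P | ∀ z ∈ P, (∑ j, c j * z j) ≤ ∑ j, c j * y j} ∧
      Module.finrank ℝ (affineSpan ℝ F).direction = d - 1 ∧
      ∃ x' ∈ F, x k ≤ x' k ∧ ∀ i, i ≠ k → x' i = x i := by
  classical
  intro x hx
  -- membership characterization
  have hmem : ∀ z, z ∈ P ↔ ∀ i, Stmt12Aux.lin (π i) z ≤ b i := by
    intro z; rw [hPdef]; simp [Stmt12Aux.lin_apply, Set.mem_setOf_eq]
  have hd : 0 < d := k.pos
  -- the set of "top" constraints
  set s : Finset (Fin m) := Finset.univ.filter (fun i => 0 < π i k) with hs_def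
  have hgk : ∀ i ∈ s, 0 < π i k := by
    intro i hi; exact (Finset.mem_filter.mp hi).2
  -- s is nonempty, else P is unbounded in direction e_k
  have hs : s.Nonempty := by
    by_contra hempty
    have hnonpos : ∀ i, π i k ≤ 0 := by
      intro i
      by_contra hpos
      exact hempty ⟨i, Finset.mem_filter.mpr ⟨Finset.mem_univ i, not_le.mp hpos⟩⟩
    obtain ⟨x₀, hx₀⟩ := hint
    have hx₀P : x₀ ∈ P := interior_subset hx₀
    have hray : ∀ t : ℝ, 0 ≤ t → x₀ + t • (Pi.single k 1 : Fin d → ℝ) ∈ P := by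
      intro t ht
      rw [hmem]
      intro i
      have := (hmem x₀).mp hx₀P i
      have hsingle := Stmt12Aux.lin_single k (π i)
      rw [map_add, map_smul, hsingle, smul_eq_mul]
      nlinarith [hnonpos i]
    obtain ⟨w, hwP, hwmax⟩ := hcomp.exists_isMaxOn ⟨x₀, hx₀P⟩
      (continuous_apply k).continuousOn
    have hwk : x₀ k ≤ w k := hwmax hx₀P
    have h1 : x₀ + (w k - x₀ k + 1) • (Pi.single k 1 : Fin d → ℝ) ∈ P :=
      hray _ (by linarith)
    have h2 : (x₀ + (w k - x₀ k + 1) • (Pi.single k 1 : Fin d → ℝ)) k ≤ w k := hwmax h1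
    simp [Pi.single_apply] at h2
    linarith
  -- the upper bound functions
  set g : Fin m → (Fin d → ℝ) → ℝ :=
    fun i z => (b i - Stmt12Aux.lin (π i) z + π i k * z k) / π i k with hg_def
  set f : (Fin d → ℝ) → ℝ := fun z => s.inf' hs (fun i => g i z) with hf_def
  -- basic properties of f
  have hzk_le : ∀ z ∈ P, z k ≤ f z := by
    intro z hz
    apply Finset.le_inf'
    intro i hi
    have hbi := (hmem z).mp hz i
    rw [hg_def, le_div_iff₀ (hgk i hi)]
    nlinarith
  have hupdmem : ∀ z ∈ P, Function.update z k (f z) ∈ P := by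
    intro z hz
    rw [hmem]
    intro i
    rw [Stmt12Aux.lin_update]
    have hbi := (hmem z).mp hz i
    rcases lt_trichotomy (π i k) 0 with hneg | hzero | hpos
    · have h1 : z k ≤ f z := hzk_le z hz
      nlinarith
    · rw [hzero]; simpa using hbi
    · have hi : i ∈ s := Finset.mem_filter.mpr ⟨Finset.mem_univ i, hpos⟩
      have h1 : f z ≤ g i z := Finset.inf'_le _ hi
      have h2 : π i k * g i z = b i - Stmt12Aux.lin (π i) z + π i k * z k := by
        simp only [hg_def]
        rw [mul_comm, div_mul_cancel₀ _ hpos.ne']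
      nlinarith
  have hfeq_bi : ∀ i ∈ s, ∀ z, f z = g i z →
      Stmt12Aux.lin (π i) (Function.update z k (f z)) = b i := by
    intro i hi z hfz
    rw [Stmt12Aux.lin_update, hfz]
    have h2 : π i k * g i z = b i - Stmt12Aux.lin (π i) z + π i k * z k := by
      simp only [hg_def]
      rw [mul_comm, div_mul_cancel₀ _ (hgk i hi).ne']
    linarith
  -- the regions T i
  set T : Fin m → Set (Fin d → ℝ) :=
    fun i => if i ∈ s then P ∩ {z | ∀ j ∈ s, g i z ≤ g j z} else ∅ with hT_def
  have hgcont : ∀ i, Continuous (g i) := by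
    intro i
    rw [hg_def]
    exact (((continuous_const.sub (Stmt12Aux.lin_continuous (π i))).add
      (continuous_const.mul (continuous_apply k))).div_const _)
  have hTclosed : ∀ i, IsClosed (T i) := by
    intro i
    simp only [hT_def]
    split
    · refine hcomp.isClosed.inter ?_
      have : {z : Fin d → ℝ | ∀ j ∈ s, g i z ≤ g j z} = ⋂ j ∈ s, {z | g i z ≤ g j z} := by
        ext z; simp
      rw [this]
      exact isClosed_biInter fun j _ => isClosed_le (hgcont i) (hgcont j)
    · exact isClosed_empty
  have hcover : ∀ z ∈ P, ∃ i, z ∈ T i := by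
    intro z hz
    obtain ⟨i, hi, hfi⟩ := Finset.exists_mem_eq_inf' hs (fun i => g i z)
    refine ⟨i, ?_⟩
    simp only [hT_def, if_pos hi]
    exact ⟨hz, fun j hj => hfi ▸ Finset.inf'_le _ hj⟩
  have hTf : ∀ i, ∀ z ∈ T i, i ∈ s ∧ z ∈ P ∧ f z = g i z := by
    intro i z hzT
    simp only [hT_def] at hzT
    by_cases hi : i ∈ s
    · rw [if_pos hi] at hzT
      exact ⟨hi, hzT.1, le_antisymm (Finset.inf'_le _ hi) (Finset.le_inf' _ _ hzT.2)⟩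
    · rw [if_neg hi] at hzT; exact absurd hzT (Set.notMem_empty z)
  -- P is convex
  have hconv : Convex ℝ P := by
    have : P = ⋂ i, {z : Fin d → ℝ | Stmt12Aux.lin (π i) z ≤ b i} := by
      ext z; simp [hmem z, Set.mem_iInter]
    rw [this]
    exact convex_iInter fun i => convex_halfSpace_le (Stmt12Aux.lin (π i)).isLinear (b i)
  -- find a fat region containing x
  obtain ⟨i, hxT, hTint⟩ := Stmt12Aux.baire_cover T P hTclosed hcover
    (Stmt12Aux.subset_closure_interior hconv hint hx)
  obtain ⟨hi_s, hxP', hfx⟩ := hTf i x hxT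
  have hπik : 0 < π i k := hgk i hi_s
  -- the interior point of T i
  obtain ⟨p, hp⟩ := hTint
  obtain ⟨hpi_s, hpP, hfp⟩ := hTf i p (interior_subset hp)
  set p' : Fin d → ℝ := Function.update p k (f p) with hp'_def
  have hp'P : p' ∈ P := hupdmem p hpP
  have hp'b : Stmt12Aux.lin (π i) p' = b i := hfeq_bi i hi_s p hfp
  -- the candidate facet
  set F : Set (Fin d → ℝ) :=
    {y ∈ P | ∀ z ∈ P, (∑ j, π i j * z j) ≤ ∑ j, π i j * y j} with hF_def
  have hFlin : ∀ y, y ∈ F ↔ y ∈ P ∧ ∀ z ∈ P, Stmt12Aux.lin (π i) z ≤ Stmt12Aux.lin (π i) y := by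
    intro y; rw [hF_def]; simp [Stmt12Aux.lin_apply, Set.mem_setOf_eq]
  have hFeq : ∀ y, y ∈ F ↔ y ∈ P ∧ Stmt12Aux.lin (π i) y = b i := by
    intro y
    rw [hFlin]
    constructor
    · rintro ⟨hyP, hymax⟩
      exact ⟨hyP, le_antisymm ((hmem y).mp hyP i) (hp'b ▸ hymax p' hp'P)⟩
    · rintro ⟨hyP, hyb⟩
      exact ⟨hyP, fun z hz => hyb ▸ (hmem z).mp hz i⟩
  -- vectorSpan F = ker (lin (π i))
  have hker_le : vectorSpan ℝ F ≤ LinearMap.ker (Stmt12Aux.lin (π i)) := by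
    rw [vectorSpan_def]
    rw [Submodule.span_le]
    rintro v ⟨a, ha, c, hc, rfl⟩
    have h1 := ((hFeq a).mp ha).2
    have h2 := ((hFeq c).mp hc).2
    simp [LinearMap.mem_ker, vsub_eq_sub, map_sub, h1, h2]
  have hle_ker : LinearMap.ker (Stmt12Aux.lin (π i)) ≤ vectorSpan ℝ F := by
    intro v hv
    rcases eq_or_ne v 0 with rfl | hv0
    · exact Submodule.zero_mem _
    obtain ⟨r, hr, hball⟩ := Metric.isOpen_iff.mp isOpen_interior p hp
    have hvpos : (0:ℝ) < ‖v‖ := norm_pos_iff.mpr hv0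
    set ε : ℝ := r / (2 * ‖v‖) with hε_def
    have hε : 0 < ε := by positivity
    set u : Fin d → ℝ := ε • v with hu_def
    have huker : Stmt12Aux.lin (π i) u = 0 := by
      rw [hu_def, map_smul, LinearMap.mem_ker.mp hv, smul_zero]
    set h : Fin d → ℝ := Function.update u k 0 with hh_def
    have hhnorm : ‖h‖ < r := by
      have h1 : ‖h‖ ≤ ‖u‖ := by
        rw [pi_norm_le_iff_of_nonneg (norm_nonneg u)]
        intro j
        rcases eq_or_ne j k with rfl | hjk
        · simp [hh_def]
        · rw [hh_def]; simp only [Function.update_of_ne hjk]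
          exact norm_le_pi_norm u j
      have h2 : ‖u‖ = r / 2 := by
        have hv' : ‖v‖ ≠ 0 := norm_ne_zero_iff.mpr hv0
        rw [hu_def, norm_smul, Real.norm_eq_abs, abs_of_pos hε, hε_def]
        field_simp
      linarith
    set q : Fin d → ℝ := p + h with hq_def
    have hqT : q ∈ T i := interior_subset (hball (by
      rw [Metric.mem_ball, hq_def, dist_eq_norm, add_sub_cancel_left]
      exact hhnorm))
    obtain ⟨-, hqP, hfq⟩ := hTf i q hqT
    -- g i q = g i p + u k
    have hlinh : Stmt12Aux.lin (π i) h = Stmt12Aux.lin (π i) u - π i k * u k := by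
      rw [hh_def, Stmt12Aux.lin_update]; ring
    have hgq : g i q = g i p + u k := by
      have hne : π i k ≠ 0 := hπik.ne'
      have hq1 : Stmt12Aux.lin (π i) q = Stmt12Aux.lin (π i) p - π i k * u k := by
        rw [hq_def, map_add, hlinh, huker]; ring
      have hq2 : q k = p k := by simp [hq_def, hh_def]
      simp only [hg_def]
      rw [hq1, hq2]
      field_simp
      ring
    -- update q k (f q) = p' + u
    have hupdq : Function.update q k (f q) = p' + u := by
      funext j
      rcases eq_or_ne j k with rfl | hjk
      · rw [Function.update_self, hfq, hgq]
        simp only [Pi.add_apply, hp'_def, Function.update_self, hfp]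
      · rw [Function.update_of_ne hjk]
        simp only [hq_def, Pi.add_apply, hh_def, Function.update_of_ne hjk,
          hp'_def]
    have hmemF : p' + u ∈ F := by
      rw [hFeq]
      constructor
      · rw [← hupdq]; exact hupdmem q hqP
      · rw [← hupdq]; exact hfeq_bi i hi_s q hfq
    have huspan : u ∈ vectorSpan ℝ F := by
      rw [vectorSpan_def]
      apply Submodule.subset_span
      have := Set.vsub_mem_vsub hmemF ((hFeq p').mpr ⟨hp'P, hp'b⟩)
      simpa [vsub_eq_sub, add_sub_cancel_left] using this
    have : v = ε⁻¹ • u := by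
      rw [hu_def, smul_smul, inv_mul_cancel₀ hε.ne', one_smul]
    rw [this]
    exact Submodule.smul_mem _ _ huspan
  have hvs : vectorSpan ℝ F = LinearMap.ker (Stmt12Aux.lin (π i)) :=
    le_antisymm hker_le hle_ker
  -- finrank computation
  have hrange : LinearMap.range (Stmt12Aux.lin (π i)) = ⊤ := by
    rw [LinearMap.range_eq_top]
    intro r
    refine ⟨(r / π i k) • (Pi.single k 1 : Fin d → ℝ), ?_⟩
    rw [map_smul, Stmt12Aux.lin_single, smul_eq_mul, div_mul_cancel₀ _ hπik.ne']
  have hrk : Module.finrank ℝ (LinearMap.ker (Stmt12Aux.lin (π i))) = d - 1 := by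
    have hrn := LinearMap.finrank_range_add_finrank_ker (Stmt12Aux.lin (π i))
    rw [hrange, finrank_top, Module.finrank_self,
      Module.finrank_fintype_fun_eq_card, Fintype.card_fin] at hrn
    omega
  refine ⟨π i, F, hπik, hF_def, ?_, ?_⟩
  · rw [direction_affineSpan, hvs, hrk]
  · refine ⟨Function.update x k (f x), ?_, ?_, ?_⟩
    · rw [hFeq]
      exact ⟨hupdmem x hxP', hfeq_bi i hi_s x hfx⟩
    · rw [Function.update_self]
      exact hzk_le x hxP'
    · intro j hjk
      exact Function.update_of_ne hjk _ _
end

section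
/- Let P ⊂ {x ∈ ℝ^d : x_k ≥ 0} be a full-dimensional polytope and F an e_k-top facet of P (outward normal π with π_k > 0). Then F is also a facet of the sweep swp_k(P) = {p − θ p_k e_k : p ∈ P, θ ∈ [0,1]}; in particular the inequality πᵀx ≤ π₀ defining F on P is valid for all of swp_k(P) and holds with equality on F. -/
lemma sum_sweep (d : ℕ) (k : Fin d) (π p : Fin d → ℝ) (c : ℝ) :
    (∑ j, π j * (p - c • (Pi.single k 1 : Fin d → ℝ)) j)
      = (∑ j, π j * p j) - c * π k := by
  have : ∀ j, π j * (p - c • (Pi.single k 1 : Fin d → ℝ)) j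
      = π j * p j - (if j = k then c * π k else 0) := by
    intro j
    by_cases h : j = k <;> simp [h, Pi.single_apply, mul_comm] <;> ring
  rw [Finset.sum_congr rfl (fun j _ => this j), Finset.sum_sub_distrib,
    Finset.sum_ite_eq' Finset.univ k (fun _ => c * π k)]
  simp

/-- An `e k`-top facet `F` of a full-dimensional polytope `P ⊆ {x | x k ≥ 0}` (with defining
inequality `πᵀx ≤ π₀`, `π k > 0`) is also a facet of the sweep `swpk d k P`: the inequality
is valid on all of the sweep, is tight exactly on `F`, and the resulting face is
`(d-1)`-dimensional. -/
theorem stmt13 (d : ℕ) (k : Fin d) (P : Set (Fin d → ℝ))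
    (hconv : Convex ℝ P) (hcomp : IsCompact P) (hint : (interior P).Nonempty)
    (hPk : ∀ x ∈ P, 0 ≤ x k)
    (π : Fin d → ℝ) (π0 : ℝ) (hπk : 0 < π k)
    (hvalid : ∀ x ∈ P, (∑ j, π j * x j) ≤ π0)
    (F : Set (Fin d → ℝ)) (hF : F = {x ∈ P | (∑ j, π j * x j) = π0})
    (hFne : F.Nonempty)
    (hdim : Module.finrank ℝ (affineSpan ℝ F).direction = d - 1) :
    (∀ x ∈ swpk d k P, (∑ j, π j * x j) ≤ π0) ∧
    {x ∈ swpk d k P | (∑ j, π j * x j) = π0} = F := by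
  subst hF
  constructor
  · rintro x ⟨p, hp, θ, hθ, rfl⟩
    rw [sum_sweep]
    have h1 := hvalid p hp
    have h2 := hPk p hp
    nlinarith [mul_nonneg (mul_nonneg hθ.1 h2) hπk.le]
  · ext x
    constructor
    · rintro ⟨⟨p, hp, θ, hθ, rfl⟩, heq⟩
      rw [sum_sweep] at heq
      have h1 := hvalid p hp
      have h2 := hPk p hp
      have hc : θ * p k = 0 := by
        by_contra h
        have hpos : 0 < θ * p k := lt_of_le_of_ne (mul_nonneg hθ.1 h2) (Ne.symm h)
        nlinarith
      rw [hc, zero_mul, sub_zero] at heq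
      simp only [hc, zero_smul, sub_zero]
      exact ⟨hp, heq⟩
    · rintro ⟨hxP, hxeq⟩
      refine ⟨⟨x, hxP, 0, ⟨le_refl _, zero_le_one⟩, by simp⟩, hxeq⟩
end
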